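/- In the setting of parameterized Gibbs direct observation, let Z_n(y) = ∫_Θ ( μ_θ(C_n(y)) / μ_{θ0}(C_n(y)) ) dΠ_0(θ). Then for μ_{θ0}-almost every y ∈ Ω, ∫_Θ ∫_Ω log( J_θ(x) / J_{θ0}(x) ) dμ_{θ0}(x) dΠ_0(θ) ≤ limsup_{n→∞} (1/n) log Z_n(y) ≤ 0. -/

import Mathlib

open MeasureTheory Filter Topology

attribute [local instance] Classical.propDecidable

noncomputable section

namespace PaperBGI

/-- The full one-sided shift space on `q` symbols. -/
abbrev FS (q : ℕ) := ℕ → Fin q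

/-- The left shift map. -/
def shift {q : ℕ} (x : FS q) : FS q := fun n => x (n + 1)

/-- The `n`-cylinder of `x`. -/
def cyl {q : ℕ} (x : FS q) (n : ℕ) : Set (FS q) := {z | ∀ j < n, z j = x j}

/-- `d(x,z) = (1/2)^{min{ n : x_n ≠ z_n }}` (and `0` if `x = z`). -/
def sdist {q : ℕ} (x z : FS q) : ℝ :=
  if h : ∃ n, x n ≠ z n then (1 / 2 : ℝ) ^ Nat.find h else 0

/-- Birkhoff sums along the shift. -/
def birk {q : ℕ} (f : FS q → ℝ) (n : ℕ) (x : FS q) : ℝ :=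
  ∑ j ∈ Finset.range n, f (shift^[j] x)

/-- Prepending a symbol to a sequence. -/
def cons {q : ℕ} (i : Fin q) (x : FS q) : FS q := fun n =>
  match n with
  | 0 => i
  | m + 1 => x m

/-- The subshift of finite type with transition matrix `M`. -/
def sftSet {q : ℕ} (M : Fin q → Fin q → Bool) : Set (FS q) :=
  {x | ∀ n, M (x n) (x (n + 1)) = true}

/-- Transitivity (irreducibility) of the transition matrix `M`. -/
def IsIrreducible {q : ℕ} (M : Fin q → Fin q → Bool) : Prop :=
  ∀ a c : Fin q, ∃ n, 0 < n ∧ ∃ p : ℕ → Fin q, p 0 = a ∧ p n = c ∧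
    ∀ i < n, M (p i) (p (i + 1)) = true

/-- Lipschitz continuity with respect to `sdist`. -/
def LipSh {q : ℕ} (f : FS q → ℝ) : Prop :=
  ∃ L : ℝ, 0 ≤ L ∧ ∀ x z, |f x - f z| ≤ L * sdist x z

/-- Lipschitz-norm distance between two functions. -/
def dLip {q : ℕ} (f g : FS q → ℝ) : ℝ :=
  (⨆ x : FS q, |f x - g x|) +
    ⨆ p : FS q × FS q,
      if p.1 = p.2 then 0 else |f p.1 - g p.1 - (f p.2 - g p.2)| / sdist p.1 p.2

/-- `J` is a (positive) normalized Jacobian on `Ω`. -/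
def Normalized {q : ℕ} (Ω : Set (FS q)) (J : FS q → ℝ) : Prop :=
  (∀ x, 0 < J x) ∧ ∀ x ∈ Ω, (∑ i : Fin q, if cons i x ∈ Ω then J (cons i x) else 0) = 1

/-- The Gibbs property (at zero pressure) w.r.t. the normalized potential `log J`. -/
def IsGibbs {q : ℕ} (Ω : Set (FS q)) (J : FS q → ℝ) (K : ℝ) (μ : Measure (FS q)) : Prop :=
  ∀ x ∈ Ω, ∀ n : ℕ, 1 ≤ n →
    K⁻¹ ≤ (μ (cyl x n)).toReal / Real.exp (birk (fun z => Real.log (J z)) n x) ∧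
      (μ (cyl x n)).toReal / Real.exp (birk (fun z => Real.log (J z)) n x) ≤ K

/-- The parameter box `Θ = [a₁,b₁] × ⋯ × [a_k,b_k]`. -/
def box {k : ℕ} (a b : Fin k → ℝ) : Set (Fin k → ℝ) :=
  Set.univ.pi fun i => Set.Icc (a i) (b i)

/-- Hypothesis A: `P₀` has a continuous strictly positive density on `Θ`. -/
def HypA {k : ℕ} (Θ : Set (Fin k → ℝ)) (P₀ : Measure (Fin k → ℝ)) : Prop :=
  IsProbabilityMeasure P₀ ∧
    ∃ ρ : (Fin k → ℝ) → ℝ, ContinuousOn ρ Θ ∧ (∀ θ ∈ Θ, 0 < ρ θ) ∧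
      P₀ = (volume.restrict Θ).withDensity fun θ => ENNReal.ofReal (ρ θ)

/-- The setting of parameterized Gibbs direct observation. -/
structure Setting (q k : ℕ) where
  /-- transition matrix of the subshift of finite type -/
  M : Fin q → Fin q → Bool
  irr : IsIrreducible M
  a : Fin k → ℝ
  b : Fin k → ℝ
  hab : ∀ i, a i ≤ b i
  /-- the parameterized family of Jacobians -/
  J : (Fin k → ℝ) → FS q → ℝ
  /-- the parameterized family of Gibbs measures -/
  μ : (Fin k → ℝ) → Measure (FS q)
  K : ℝ
  hK : 1 < K
  lip : ∀ θ ∈ box a b, LipSh fun x => Real.log (J θ x)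
  norm : ∀ θ ∈ box a b, Normalized (sftSet M) (J θ)
  contJ : ∀ θ' ∈ box a b, ∀ ε > (0 : ℝ), ∃ δ > (0 : ℝ), ∀ θ ∈ box a b, dist θ θ' < δ →
      dLip (fun x => Real.log (J θ x)) (fun x => Real.log (J θ' x)) < ε
  embJ : ∀ θ' ∈ box a b, ∀ ε > (0 : ℝ), ∃ δ > (0 : ℝ), ∀ θ ∈ box a b,
      dLip (fun x => Real.log (J θ x)) (fun x => Real.log (J θ' x)) < δ → dist θ θ' < ε
  injJ : Set.InjOn J (box a b)
  prob : ∀ θ ∈ box a b, IsProbabilityMeasure (μ θ)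
  erg : ∀ θ ∈ box a b, Ergodic (shift (q := q)) (μ θ)
  supp : ∀ θ ∈ box a b, μ θ (sftSet M) = 1
  gibbs : ∀ θ ∈ box a b, IsGibbs (sftSet M) (J θ) K (μ θ)
  uniq : ∀ θ ∈ box a b, ∀ ν : Measure (FS q), IsProbabilityMeasure ν → ν.map shift = ν →
      ν (sftSet M) = 1 → (∃ K' > (1 : ℝ), IsGibbs (sftSet M) (J θ) K' ν) → ν = μ θ
  measμ : ∀ (y : FS q) (n : ℕ), Measurable fun θ => μ θ (cyl y n)

/-- Relative entropy `h(μ_{θ₀} | μ_θ) = ∫ log (J_{θ₀}/J_θ) dμ_{θ₀}`. -/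
def relEnt {q k : ℕ} (S : Setting q k) (θ₀ θ : Fin k → ℝ) : ℝ :=
  ∫ x, Real.log (S.J θ₀ x / S.J θ x) ∂(S.μ θ₀)

/-- The `δ`-ball around `θ₀` inside `Θ`. -/
def pball {k : ℕ} (Θ : Set (Fin k → ℝ)) (θ₀ : Fin k → ℝ) (δ : ℝ) : Set (Fin k → ℝ) :=
  {θ ∈ Θ | dist θ θ₀ < δ}



def proj (q n : ℕ) (x : FS q) : Fin n → Fin q := fun j => x j

lemma measurable_proj (q n : ℕ) : Measurable (proj q n) :=
  measurable_pi_lambda _ fun j => measurable_pi_apply _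

instance (q n : ℕ) : MeasurableSingletonClass (Fin n → Fin q) := by
  constructor
  intro w
  have : ({w} : Set (Fin n → Fin q)) = Set.univ.pi fun j => ({w j} : Set (Fin q)) := by
    ext v
    simp [Set.mem_pi, funext_iff]
  rw [this]
  exact MeasurableSet.univ_pi fun j => measurableSet_singleton _

lemma cyl_eq {q : ℕ} (y : FS q) (n : ℕ) : cyl y n = proj q n ⁻¹' {proj q n y} := by
  ext z
  simp only [cyl, Set.mem_setOf_eq, Set.mem_preimage, Set.mem_singleton_iff, funext_iff, proj]
  constructor
  · intro h j; exact h j j.2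
  · intro h j hj; exact h ⟨j, hj⟩

lemma measurableSet_cyl {q : ℕ} (y : FS q) (n : ℕ) : MeasurableSet (cyl y n) := by
  rw [cyl_eq]; exact measurable_proj q n (measurableSet_singleton _)

lemma measurable_factor {q n : ℕ} (g : (Fin n → Fin q) → ℝ) :
    Measurable fun x => g (proj q n x) :=
  (measurable_of_countable g).comp (measurable_proj q n)

lemma measurable_shift {q : ℕ} : Measurable (shift (q := q)) :=
  measurable_pi_lambda _ fun j => measurable_pi_apply _

lemma measurableSet_sft {q : ℕ} (M : Fin q → Fin q → Bool) :
    MeasurableSet (sftSet M) := by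
  unfold sftSet
  have : {x : FS q | ∀ n, M (x n) (x (n + 1)) = true}
      = ⋂ n, {x : FS q | M (x n) (x (n + 1)) = true} := by
    ext x; simp
  rw [this]
  refine MeasurableSet.iInter fun n => ?_
  have : {x : FS q | M (x n) (x (n + 1)) = true}
      = (fun x : FS q => (x n, x (n + 1))) ⁻¹' {p : Fin q × Fin q | M p.1 p.2 = true} := rfl
  rw [this]
  exact ((measurable_pi_apply n).prodMk (measurable_pi_apply (n + 1)))
    ((Set.to_countable _).measurableSet)

lemma sdist_nonneg {q : ℕ} (x z : FS q) : 0 ≤ sdist x z := by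
  unfold sdist; split_ifs <;> positivity

lemma sdist_le_one {q : ℕ} (x z : FS q) : sdist x z ≤ 1 := by
  unfold sdist
  split_ifs
  · exact pow_le_one₀ (by norm_num) (by norm_num)
  · norm_num

lemma sdist_le_of_agree {q : ℕ} {x z : FS q} {n : ℕ} (h : ∀ j < n, x j = z j) :
    sdist x z ≤ (1 / 2 : ℝ) ^ n := by
  unfold sdist
  split_ifs with hex
  · refine pow_le_pow_of_le_one (by norm_num) (by norm_num) ?_
    rw [Nat.le_find_iff]
    intro m hm
    exact not_not_intro (h m hm)
  · positivity

lemma LipSh.measurable {q : ℕ} [Nonempty (Fin q)] {f : FS q → ℝ} (hf : LipSh f) :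
    Measurable f := by
  obtain ⟨L, hL0, hL⟩ := hf
  set i0 : Fin q := Classical.arbitrary _ with hi0
  have key : ∀ m : ℕ, Measurable fun x : FS q =>
      f (fun j => if h : j < m then x j else i0) := by
    intro m
    exact measurable_factor
      (g := fun w : Fin m → Fin q => f (fun j => if h : j < m then w ⟨j, h⟩ else i0))
  refine measurable_of_tendsto_metrizable key ?_
  rw [tendsto_pi_nhds]
  intro x
  rw [tendsto_iff_dist_tendsto_zero]
  refine squeeze_zero (fun m => dist_nonneg) (g := fun m => L * (1 / 2 : ℝ) ^ m) ?_ ?_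
  · intro m
    rw [Real.dist_eq]
    refine le_trans (hL _ _) (mul_le_mul_of_nonneg_left ?_ hL0)
    exact sdist_le_of_agree fun j hj => by simp [hj]
  · simpa using (tendsto_pow_atTop_nhds_zero_of_lt_one (by norm_num : (0:ℝ) ≤ 1/2)
      (by norm_num)).const_mul L

lemma LipSh.bounded {q : ℕ} [Nonempty (Fin q)] {f : FS q → ℝ} (hf : LipSh f) :
    ∃ B : ℝ, ∀ x, |f x| ≤ B := by
  obtain ⟨L, hL0, hL⟩ := hf
  have hne : Nonempty (FS q) := ⟨fun _ => Classical.arbitrary _⟩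
  obtain ⟨x0⟩ := hne
  refine ⟨|f x0| + L, fun x => ?_⟩
  have h1 : |f x - f x0| ≤ L * sdist x x0 := hL x x0
  have h2 : L * sdist x x0 ≤ L := by
    nlinarith [sdist_le_one x x0, sdist_nonneg x x0]
  calc |f x| = |f x0 + (f x - f x0)| := by ring_nf
    _ ≤ |f x0| + |f x - f x0| := abs_add_le _ _
    _ ≤ |f x0| + L := by linarith

lemma abs_sub_le_dLip {q : ℕ} [Nonempty (Fin q)] {f g : FS q → ℝ}
    (hf : LipSh f) (hg : LipSh g) (x : FS q) : |f x - g x| ≤ dLip f g := by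
  obtain ⟨Bf, hBf⟩ := hf.bounded
  obtain ⟨Bg, hBg⟩ := hg.bounded
  have hbdd : BddAbove (Set.range fun x : FS q => |f x - g x|) := by
    refine ⟨Bf + Bg, ?_⟩
    rintro _ ⟨z, rfl⟩
    calc |f z - g z| ≤ |f z| + |g z| := abs_sub _ _
      _ ≤ Bf + Bg := add_le_add (hBf z) (hBg z)
  have h1 : |f x - g x| ≤ ⨆ z : FS q, |f z - g z| := le_ciSup hbdd x
  have h2 : (0:ℝ) ≤ ⨆ p : FS q × FS q,
      if p.1 = p.2 then 0 else |f p.1 - g p.1 - (f p.2 - g p.2)| / sdist p.1 p.2 := by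
    refine Real.iSup_nonneg fun p => ?_
    split_ifs
    · exact le_refl _
    · exact div_nonneg (abs_nonneg _) (sdist_nonneg _ _)
  unfold dLip
  linarith


def pad {q n : ℕ} (i0 : Fin q) (w : Fin n → Fin q) : FS q :=
  fun j => if h : j < n then w ⟨j, h⟩ else i0

lemma proj_pad {q n : ℕ} (i0 : Fin q) (w : Fin n → Fin q) : proj q n (pad i0 w) = w := by
  funext j
  simp [proj, pad, j.2]

lemma cyl_pad {q n : ℕ} (i0 : Fin q) (w : Fin n → Fin q) :
    cyl (pad i0 w) n = proj q n ⁻¹' {w} := by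
  rw [cyl_eq, proj_pad]

lemma integral_factor {q : ℕ} (μ : Measure (FS q)) [IsProbabilityMeasure μ] (n : ℕ)
    (ψ : (Fin n → Fin q) → ℝ) :
    ∫ y, ψ (proj q n y) ∂μ
      = ∑ w : Fin n → Fin q, (μ (proj q n ⁻¹' {w})).toReal * ψ w := by
  rw [← integral_map (measurable_proj q n).aemeasurable
    (measurable_of_countable ψ).aestronglyMeasurable]
  rw [integral_fintype (Integrable.of_finite)]
  refine Finset.sum_congr rfl fun w _ => ?_
  rw [measureReal_def, Measure.map_apply (measurable_proj q n) (measurableSet_singleton w)]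
  simp [smul_eq_mul]

lemma sum_measure_fiber {q : ℕ} (μ : Measure (FS q)) [IsProbabilityMeasure μ] (n : ℕ) :
    ∑ w : Fin n → Fin q, (μ (proj q n ⁻¹' {w})).toReal = 1 := by
  have hdisj : Pairwise (Function.onFun Disjoint fun w : Fin n → Fin q => proj q n ⁻¹' {w}) :=
    fun w v hwv => (Set.disjoint_singleton.mpr hwv).preimage _
  have hunion : (⋃ w : Fin n → Fin q, proj q n ⁻¹' {w}) = Set.univ := by
    ext x
    simp only [Set.mem_iUnion, Set.mem_preimage, Set.mem_singleton_iff, Set.mem_univ, iff_true]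
    exact ⟨proj q n x, rfl⟩
  have hsum : ∑ w : Fin n → Fin q, μ (proj q n ⁻¹' {w}) = 1 := by
    rw [← tsum_fintype (L := SummationFilter.unconditional _), ← measure_iUnion hdisj
      (fun w => measurable_proj q n (measurableSet_singleton w)), hunion, measure_univ]
  rw [← ENNReal.toReal_sum (fun w _ => measure_ne_top μ _), hsum, ENNReal.toReal_one]

lemma ratio_integral_le_one {q : ℕ} (ν μ : Measure (FS q)) [IsProbabilityMeasure ν]
    [IsProbabilityMeasure μ] (n : ℕ) :
    ∫ y, (ν (cyl y n)).toReal / (μ (cyl y n)).toReal ∂μ ≤ 1 := by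
  have hrw : ∫ y, (ν (cyl y n)).toReal / (μ (cyl y n)).toReal ∂μ
      = ∫ y, (fun w => (ν (proj q n ⁻¹' {w})).toReal / (μ (proj q n ⁻¹' {w})).toReal)
          (proj q n y) ∂μ :=
    integral_congr_ae (Filter.EventuallyEq.of_eq (funext fun y => by rw [cyl_eq]))
  rw [hrw, integral_factor μ n
    (fun w => (ν (proj q n ⁻¹' {w})).toReal / (μ (proj q n ⁻¹' {w})).toReal)]
  calc ∑ w : Fin n → Fin q, (μ (proj q n ⁻¹' {w})).toReal *
        ((ν (proj q n ⁻¹' {w})).toReal / (μ (proj q n ⁻¹' {w})).toReal)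
      ≤ ∑ w : Fin n → Fin q, (ν (proj q n ⁻¹' {w})).toReal := by
        refine Finset.sum_le_sum fun w _ => ?_
        rcases eq_or_ne ((μ (proj q n ⁻¹' {w})).toReal) 0 with h | h
        · simp [h, ENNReal.toReal_nonneg]
        · rw [mul_comm, div_mul_cancel₀ _ h]
    _ = 1 := sum_measure_fiber ν n

lemma integrable_factor {q n : ℕ} [Nonempty (Fin q)] (μ : Measure (FS q))
    [IsProbabilityMeasure μ] (ψ : (Fin n → Fin q) → ℝ) :
    Integrable (fun y => ψ (proj q n y)) μ := by
  have hne : (Finset.univ : Finset (Fin n → Fin q)).Nonempty := Finset.univ_nonempty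
  refine Integrable.mono' (integrable_const (Finset.univ.sup' hne fun w => |ψ w|))
    (measurable_factor ψ).aestronglyMeasurable (ae_of_all _ fun y => ?_)
  rw [Real.norm_eq_abs]
  exact Finset.le_sup' (fun w => |ψ w|) (Finset.mem_univ (proj q n y))

lemma measurableSet_box {k : ℕ} (a b : Fin k → ℝ) : MeasurableSet (box a b) :=
  MeasurableSet.univ_pi fun _ => measurableSet_Icc

lemma gibbs_lb {q k : ℕ} (S : Setting q k) {θ : Fin k → ℝ} (hθ : θ ∈ box S.a S.b)
    {y : FS q} (hy : y ∈ sftSet S.M) {n : ℕ} (hn : 1 ≤ n) :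
    S.K⁻¹ * Real.exp (birk (fun z => Real.log (S.J θ z)) n y) ≤ ((S.μ θ) (cyl y n)).toReal := by
  have h := (S.gibbs θ hθ y hy n hn).1
  rw [le_div_iff₀ (Real.exp_pos _)] at h
  linarith

lemma gibbs_ub {q k : ℕ} (S : Setting q k) {θ : Fin k → ℝ} (hθ : θ ∈ box S.a S.b)
    {y : FS q} (hy : y ∈ sftSet S.M) {n : ℕ} (hn : 1 ≤ n) :
    ((S.μ θ) (cyl y n)).toReal ≤ S.K * Real.exp (birk (fun z => Real.log (S.J θ z)) n y) := by
  have h := (S.gibbs θ hθ y hy n hn).2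
  rw [div_le_iff₀ (Real.exp_pos _)] at h
  linarith [h]

lemma cyl_pos {q k : ℕ} (S : Setting q k) {θ : Fin k → ℝ} (hθ : θ ∈ box S.a S.b)
    {y : FS q} (hy : y ∈ sftSet S.M) {n : ℕ} (hn : 1 ≤ n) :
    0 < ((S.μ θ) (cyl y n)).toReal := by
  have hK : (0:ℝ) < S.K := lt_trans one_pos S.hK
  have := gibbs_lb S hθ hy hn
  have hpos : (0:ℝ) < S.K⁻¹ * Real.exp (birk (fun z => Real.log (S.J θ z)) n y) :=
    mul_pos (inv_pos.mpr hK) (Real.exp_pos _)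
  linarith

lemma integrableOn_cylratio {q k : ℕ} (S : Setting q k) (P₀ : Measure (Fin k → ℝ))
    [IsFiniteMeasure P₀] (y : FS q) (n : ℕ) (c : ℝ) :
    IntegrableOn (fun θ => ((S.μ θ) (cyl y n)).toReal / c) (box S.a S.b) P₀ := by
  refine Integrable.div_const ?_ c
  refine Integrable.mono' (integrable_const (1:ℝ))
    ((S.measμ y n).ennreal_toReal).aestronglyMeasurable ?_
  rw [ae_restrict_iff' (measurableSet_box S.a S.b)]
  refine ae_of_all _ fun θ hθ => ?_
  haveI := S.prob θ hθ
  rw [Real.norm_eq_abs, abs_of_nonneg ENNReal.toReal_nonneg]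
  have := ENNReal.toReal_mono (by simp : (1:ENNReal) ≠ ⊤) (prob_le_one (μ := S.μ θ) (s := cyl y n))
  simpa using this


lemma relEnt_nonpos {q k : ℕ} [Nonempty (Fin q)] (S : Setting q k) {θ₀ θ : Fin k → ℝ}
    (hθ₀ : θ₀ ∈ box S.a S.b) (hθ : θ ∈ box S.a S.b) :
    ∫ x, Real.log (S.J θ x / S.J θ₀ x) ∂(S.μ θ₀) ≤ 0 := by
  haveI h0 := S.prob θ₀ hθ₀
  haveI hp := S.prob θ hθ
  set f : FS q → ℝ := fun x => Real.log (S.J θ x) - Real.log (S.J θ₀ x) with hfdef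
  have hrw : (fun x => Real.log (S.J θ x / S.J θ₀ x)) = f := by
    funext x
    exact Real.log_div (ne_of_gt ((S.norm θ hθ).1 x)) (ne_of_gt ((S.norm θ₀ hθ₀).1 x))
  rw [hrw]
  have hmθ : Measurable fun x => Real.log (S.J θ x) := (S.lip θ hθ).measurable
  have hmθ₀ : Measurable fun x => Real.log (S.J θ₀ x) := (S.lip θ₀ hθ₀).measurable
  have hfm : Measurable f := hmθ.sub hmθ₀
  obtain ⟨B1, hB1⟩ := (S.lip θ hθ).bounded
  obtain ⟨B2, hB2⟩ := (S.lip θ₀ hθ₀).bounded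
  have hfb : ∀ x, |f x| ≤ B1 + B2 := fun x => (abs_sub _ _).trans (add_le_add (hB1 x) (hB2 x))
  have hlogK : 0 < Real.log S.K := Real.log_pos S.hK
  have mp : MeasurePreserving shift (S.μ θ₀) (S.μ θ₀) := (S.erg θ₀ hθ₀).toMeasurePreserving
  have hinv : ∀ j : ℕ, ∫ y, f (shift^[j] y) ∂(S.μ θ₀) = ∫ y, f y ∂(S.μ θ₀) := by
    intro j
    have hmape := (mp.iterate j).map_eq
    have h := integral_map (μ := S.μ θ₀) (φ := shift^[j])
      (measurable_shift.iterate j).aemeasurable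
      (f := f) (by rw [hmape]; exact hfm.aestronglyMeasurable)
    rw [hmape] at h
    exact h.symm
  have hbirkint : ∀ n : ℕ, ∫ y, birk f n y ∂(S.μ θ₀) = n * ∫ y, f y ∂(S.μ θ₀) := by
    intro n
    have h : ∫ y, birk f n y ∂(S.μ θ₀)
        = ∑ j ∈ Finset.range n, ∫ y, f (shift^[j] y) ∂(S.μ θ₀) :=
      integral_finset_sum _ fun j _ =>
        Integrable.mono' (integrable_const (B1 + B2))
          (hfm.comp (measurable_shift.iterate j)).aestronglyMeasurable
          (ae_of_all _ fun x => by rw [Real.norm_eq_abs]; exact hfb _)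
    rw [h]
    simp only [hinv]
    rw [Finset.sum_const, Finset.card_range, nsmul_eq_mul]
  have hae : ∀ᵐ y ∂(S.μ θ₀), y ∈ sftSet S.M := by
    rw [ae_iff]
    have h : {y | ¬ y ∈ sftSet S.M} = (sftSet S.M)ᶜ := rfl
    rw [h, measure_compl (measurableSet_sft S.M) (measure_ne_top _ _), S.supp θ₀ hθ₀,
      measure_univ]
    simp
  have key : ∀ n : ℕ, 1 ≤ n → (n : ℝ) * ∫ y, f y ∂(S.μ θ₀) ≤ 2 * Real.log S.K := by
    intro n hn
    have hKpos : (0:ℝ) < S.K := lt_trans one_pos S.hK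
    have hpt : ∀ y ∈ sftSet S.M, birk f n y ≤ (2 * Real.log S.K - 1) +
        ((S.μ θ) (cyl y n)).toReal / ((S.μ θ₀) (cyl y n)).toReal := by
      intro y hy
      have h1 := gibbs_lb S hθ hy hn
      have h2 := gibbs_ub S hθ₀ hy hn
      have ha : 0 < ((S.μ θ) (cyl y n)).toReal := cyl_pos S hθ hy hn
      have ha0 : 0 < ((S.μ θ₀) (cyl y n)).toReal := cyl_pos S hθ₀ hy hn
      set bθ := birk (fun z => Real.log (S.J θ z)) n y with hbθ
      set b0 := birk (fun z => Real.log (S.J θ₀ z)) n y with hb0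
      have hbf : birk f n y = bθ - b0 := by
        rw [hbθ, hb0, hfdef]
        simp only [birk, Finset.sum_sub_distrib]
      have e1 : Real.exp bθ ≤ S.K * ((S.μ θ) (cyl y n)).toReal := by
        have hK1 : S.K⁻¹ * S.K = 1 := inv_mul_cancel₀ (ne_of_gt hKpos)
        nlinarith [Real.exp_pos bθ]
      have e2 : S.K⁻¹ * ((S.μ θ₀) (cyl y n)).toReal ≤ Real.exp b0 := by
        have hK1 : S.K⁻¹ * S.K = 1 := inv_mul_cancel₀ (ne_of_gt hKpos)
        have h4 := mul_le_mul_of_nonneg_left h2 (le_of_lt (inv_pos.mpr hKpos))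
        calc S.K⁻¹ * ((S.μ θ₀) (cyl y n)).toReal
            ≤ S.K⁻¹ * (S.K * Real.exp b0) := h4
          _ = Real.exp b0 := by rw [← mul_assoc, hK1, one_mul]
      have l1 : bθ ≤ Real.log S.K + Real.log ((S.μ θ) (cyl y n)).toReal := by
        have := Real.log_le_log (Real.exp_pos bθ) e1
        rwa [Real.log_exp, Real.log_mul (ne_of_gt hKpos) (ne_of_gt ha)] at this
      have l2 : -Real.log S.K + Real.log ((S.μ θ₀) (cyl y n)).toReal ≤ b0 := by
        have h3 := Real.log_le_log (mul_pos (inv_pos.mpr hKpos) ha0) e2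
        rwa [Real.log_exp, Real.log_mul (ne_of_gt (inv_pos.mpr hKpos)) (ne_of_gt ha0),
          Real.log_inv] at h3
      have l3 : Real.log (((S.μ θ) (cyl y n)).toReal / ((S.μ θ₀) (cyl y n)).toReal)
          ≤ ((S.μ θ) (cyl y n)).toReal / ((S.μ θ₀) (cyl y n)).toReal - 1 :=
        Real.log_le_sub_one_of_pos (div_pos ha ha0)
      rw [Real.log_div (ne_of_gt ha) (ne_of_gt ha0)] at l3
      rw [hbf]
      linarith
    have hratio_int : Integrable
        (fun y => ((S.μ θ) (cyl y n)).toReal / ((S.μ θ₀) (cyl y n)).toReal) (S.μ θ₀) := by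
      have h : (fun y => ((S.μ θ) (cyl y n)).toReal / ((S.μ θ₀) (cyl y n)).toReal)
          = fun y => (fun w => ((S.μ θ) (proj q n ⁻¹' {w})).toReal /
              ((S.μ θ₀) (proj q n ⁻¹' {w})).toReal) (proj q n y) :=
        funext fun y => by rw [cyl_eq]
      rw [h]
      exact integrable_factor (S.μ θ₀) (fun w => ((S.μ θ) (proj q n ⁻¹' {w})).toReal /
        ((S.μ θ₀) (proj q n ⁻¹' {w})).toReal)
    have hbirk_int : Integrable (birk f n) (S.μ θ₀) := by
      have h : birk f n = fun y => ∑ j ∈ Finset.range n, f (shift^[j] y) := rfl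
      rw [h]
      exact integrable_finset_sum _ fun j _ =>
        Integrable.mono' (integrable_const (B1 + B2))
          (hfm.comp (measurable_shift.iterate j)).aestronglyMeasurable
          (ae_of_all _ fun x => by rw [Real.norm_eq_abs]; exact hfb _)
    have hmono := integral_mono_ae hbirk_int
      ((integrable_const (2 * Real.log S.K - 1)).add hratio_int)
      (hae.mono fun y hy => by simpa using hpt y hy)
    rw [hbirkint n] at hmono
    simp only [Pi.add_apply] at hmono
    rw [integral_add (integrable_const _) hratio_int] at hmono
    simp only [integral_const, measureReal_def, measure_univ, ENNReal.toReal_one, one_smul, smul_eq_mul] at hmono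
    have hr1 := ratio_integral_le_one (S.μ θ) (S.μ θ₀) n
    linarith
  by_contra hpos
  push_neg at hpos
  set c := ∫ y, f y ∂(S.μ θ₀) with hc
  obtain ⟨n, hn⟩ := exists_nat_gt (2 * Real.log S.K / c)
  have hn1 : 1 ≤ n + 1 := Nat.le_add_left 1 n
  have hk := key (n + 1) hn1
  have h2 : 2 * Real.log S.K < (n : ℝ) * c := (div_lt_iff₀ hpos).mp hn
  have h3 : (n : ℝ) * c ≤ ((n + 1 : ℕ) : ℝ) * c := by
    push_cast
    nlinarith
  linarith


lemma box_volume_pos {k : ℕ} {a b : Fin k → ℝ} (P₀ : Measure (Fin k → ℝ))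
    (hA : HypA (box a b) P₀) (hab : ∀ i, a i ≤ b i) : ∀ i, a i < b i := by
  intro i
  rcases lt_or_eq_of_le (hab i) with h | h
  · exact h
  obtain ⟨hprob, ρ, hρc, hρpos, hρeq⟩ := hA
  have hvol : volume (box a b) = 0 := by
    rw [box, volume_pi, Measure.pi_pi]
    refine Finset.prod_eq_zero (Finset.mem_univ i) ?_
    rw [Real.volume_Icc, ← h]
    simp
  have hres : (volume.restrict (box a b)) = 0 := Measure.restrict_eq_zero.mpr hvol
  have hP0 : P₀ Set.univ = 0 := by
    have hac := withDensity_absolutelyContinuous (volume.restrict (box a b))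
      (fun θ => ENNReal.ofReal (ρ θ))
    rw [← hρeq] at hac
    refine hac ?_
    rw [hres]
    rfl
  haveI := hprob
  rw [measure_univ] at hP0
  exact absurd hP0 one_ne_zero

lemma pball_pos {k : ℕ} {a b : Fin k → ℝ} (P₀ : Measure (Fin k → ℝ))
    (hA : HypA (box a b) P₀) (hab : ∀ i, a i ≤ b i) {θ₀ : Fin k → ℝ}
    (hθ₀ : θ₀ ∈ box a b) {δ : ℝ} (hδ : 0 < δ) :
    0 < P₀ (pball (box a b) θ₀ δ) := by
  have hab' : ∀ i, a i < b i := box_volume_pos P₀ hA hab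
  obtain ⟨hprob, ρ, hρc, hρpos, hρeq⟩ := hA
  set B' : Set (Fin k → ℝ) :=
    Set.univ.pi fun i => Set.Icc (max (a i) (θ₀ i - δ/2)) (min (b i) (θ₀ i + δ/2)) with hB'
  have hθ₀i : ∀ i, a i ≤ θ₀ i ∧ θ₀ i ≤ b i := fun i => by
    have := hθ₀ i (Set.mem_univ i)
    exact ⟨this.1, this.2⟩
  have hlen : ∀ i, max (a i) (θ₀ i - δ/2) < min (b i) (θ₀ i + δ/2) := by
    intro i
    rcases hθ₀i i with ⟨h1, h2⟩
    refine max_lt (lt_min (hab' i) (by linarith)) (lt_min (by linarith) (by linarith))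
  have hB'box : B' ⊆ box a b := by
    intro θ hθ
    intro i _
    have := hθ i (Set.mem_univ i)
    exact ⟨le_trans (le_max_left _ _) this.1, le_trans this.2 (min_le_left _ _)⟩
  have hB'ball : B' ⊆ pball (box a b) θ₀ δ := by
    intro θ hθ
    refine ⟨hB'box hθ, ?_⟩
    have hd : dist θ θ₀ ≤ δ/2 := by
      rw [dist_pi_le_iff (by linarith)]
      intro i
      have := hθ i (Set.mem_univ i)
      rw [Real.dist_eq, abs_le]
      constructor
      · have := le_trans (le_max_right (a i) (θ₀ i - δ/2)) this.1
        linarith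
      · have := le_trans this.2 (min_le_right (b i) (θ₀ i + δ/2))
        linarith
    linarith [half_lt_self hδ]
  have hθ₀B' : θ₀ ∈ B' := by
    intro i _
    rcases hθ₀i i with ⟨h1, h2⟩
    exact ⟨max_le h1 (by linarith), le_min h2 (by linarith)⟩
  have hB'meas : MeasurableSet B' := MeasurableSet.univ_pi fun _ => measurableSet_Icc
  have hB'comp : IsCompact B' := isCompact_univ_pi fun i => isCompact_Icc
  obtain ⟨θm, hθmB', hθmin⟩ := hB'comp.exists_isMinOn ⟨θ₀, hθ₀B'⟩ (hρc.mono hB'box)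
  have hm : 0 < ρ θm := hρpos θm (hB'box hθmB')
  have hvolB' : 0 < volume B' := by
    rw [hB', volume_pi, Measure.pi_pi]
    refine lt_of_le_of_ne zero_le (Ne.symm ?_)
    rw [Finset.prod_ne_zero_iff]
    intro i _
    rw [Real.volume_Icc]
    simp only [ne_eq, ENNReal.ofReal_eq_zero, not_le]
    linarith [hlen i]
  have hkey : 0 < P₀ B' := by
    rw [hρeq, withDensity_apply _ hB'meas]
    have hmono : ∫⁻ θ in B', ENNReal.ofReal (ρ θm) ∂(volume.restrict (box a b))
        ≤ ∫⁻ θ in B', ENNReal.ofReal (ρ θ) ∂(volume.restrict (box a b)) := by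
      refine setLIntegral_mono' hB'meas fun θ hθ => ?_
      exact ENNReal.ofReal_le_ofReal (hθmin hθ)
    refine lt_of_lt_of_le ?_ hmono
    rw [setLIntegral_const]
    have hres : (volume.restrict (box a b)) B' = volume B' := by
      rw [Measure.restrict_apply hB'meas, Set.inter_eq_self_of_subset_left hB'box]
    rw [hres]
    exact ENNReal.mul_pos (by simp [ENNReal.ofReal_eq_zero, not_le, hm])
      (ne_of_gt hvolB')
  exact lt_of_lt_of_le hkey (measure_mono hB'ball)

end PaperBGI

namespace PaperBGI

/-- For `μ_{θ₀}`-a.e. `y`, with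
`Z_n(y) = ∫_Θ μ_θ(C_n(y))/μ_{θ₀}(C_n(y)) dΠ₀(θ)`, one has
`∫_Θ ∫ log(J_θ/J_{θ₀}) dμ_{θ₀} dΠ₀ ≤ limsup (1/n) log Z_n(y) ≤ 0`
(the limsup bounds being stated through frequently/eventually estimates). -/
theorem partition_function_bounds {q k : ℕ} (S : Setting q k)
    (P₀ : Measure (Fin k → ℝ)) (hA : HypA (box S.a S.b) P₀)
    (θ₀ : Fin k → ℝ) (hθ₀ : θ₀ ∈ box S.a S.b) :
    ∀ᵐ y ∂(S.μ θ₀), ∀ ζ > (0 : ℝ),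
      (∃ᶠ n : ℕ in Filter.atTop,
        (∫ θ in box S.a S.b,
            (∫ x, Real.log (S.J θ x / S.J θ₀ x) ∂(S.μ θ₀)) ∂P₀) - ζ
          ≤ (1 / n : ℝ) * Real.log (∫ θ in box S.a S.b,
              ((S.μ θ) (cyl y n)).toReal / ((S.μ θ₀) (cyl y n)).toReal ∂P₀)) ∧
      (∀ᶠ n : ℕ in Filter.atTop,
        (1 / n : ℝ) * Real.log (∫ θ in box S.a S.b,
            ((S.μ θ) (cyl y n)).toReal / ((S.μ θ₀) (cyl y n)).toReal ∂P₀)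
          ≤ ζ) := by
  -- dispose of the degenerate case `q = 0`
  rcases Nat.eq_zero_or_pos q with hq | hq
  · subst hq
    haveI : IsEmpty (FS 0) := ⟨fun x => (x 0).elim0⟩
    have h1 := (S.prob θ₀ hθ₀).measure_univ
    rw [Set.univ_eq_empty_iff.mpr this, measure_empty] at h1
    exact absurd h1 (by norm_num)
  haveI : Nonempty (Fin q) := ⟨⟨0, hq⟩⟩
  haveI hP0 : IsProbabilityMeasure P₀ := hA.1
  haveI h0 : IsProbabilityMeasure (S.μ θ₀) := S.prob θ₀ hθ₀
  have hKpos : (0:ℝ) < S.K := lt_trans one_pos S.hK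
  have hKinv : (0:ℝ) < S.K⁻¹ := inv_pos.mpr hKpos
  set i0 : Fin q := Classical.arbitrary _ with hi0
  -- the double integral is nonpositive
  have hI : (∫ θ in box S.a S.b,
      (∫ x, Real.log (S.J θ x / S.J θ₀ x) ∂(S.μ θ₀)) ∂P₀) ≤ 0 := by
    refine integral_nonpos_of_ae ?_
    rw [Filter.EventuallyLE, ae_restrict_iff' (measurableSet_box S.a S.b)]
    exact ae_of_all _ fun θ hθ => relEnt_nonpos S hθ₀ hθ
  -- basic facts about `Z n`
  have hZnonneg : ∀ (n : ℕ) (y : FS q), 0 ≤ ∫ θ in box S.a S.b,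
      ((S.μ θ) (cyl y n)).toReal / ((S.μ θ₀) (cyl y n)).toReal ∂P₀ := fun n y =>
    integral_nonneg fun θ => div_nonneg ENNReal.toReal_nonneg ENNReal.toReal_nonneg
  have hfac : ∀ n : ℕ, (fun y : FS q => ∫ θ in box S.a S.b,
        ((S.μ θ) (cyl y n)).toReal / ((S.μ θ₀) (cyl y n)).toReal ∂P₀)
      = fun y => (fun w : Fin n → Fin q => ∫ θ in box S.a S.b,
          ((S.μ θ) (proj q n ⁻¹' {w})).toReal / ((S.μ θ₀) (proj q n ⁻¹' {w})).toReal ∂P₀)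
        (proj q n y) := fun n => funext fun y => by simp only [cyl_eq]
  have hintZ : ∀ n : ℕ, Integrable (fun y : FS q => ∫ θ in box S.a S.b,
      ((S.μ θ) (cyl y n)).toReal / ((S.μ θ₀) (cyl y n)).toReal ∂P₀) (S.μ θ₀) := by
    intro n
    rw [hfac n]
    exact integrable_factor (S.μ θ₀) (fun w : Fin n → Fin q => ∫ θ in box S.a S.b,
      ((S.μ θ) (proj q n ⁻¹' {w})).toReal / ((S.μ θ₀) (proj q n ⁻¹' {w})).toReal ∂P₀)
  have hfiber_int : ∀ (n : ℕ) (w : Fin n → Fin q),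
      IntegrableOn (fun θ => ((S.μ θ) (proj q n ⁻¹' {w})).toReal) (box S.a S.b) P₀ := by
    intro n w
    have h := integrableOn_cylratio S P₀ (pad i0 w) n 1
    simpa [cyl_pad, div_one] using h
  have hratio_intOn : ∀ (n : ℕ) (w : Fin n → Fin q),
      IntegrableOn (fun θ => ((S.μ θ) (proj q n ⁻¹' {w})).toReal /
        ((S.μ θ₀) (proj q n ⁻¹' {w})).toReal) (box S.a S.b) P₀ := by
    intro n w
    have h := integrableOn_cylratio S P₀ (pad i0 w) n (((S.μ θ₀) (proj q n ⁻¹' {w})).toReal)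
    simpa [cyl_pad] using h
  -- the expectation of `Z n` is at most 1
  have hZle1 : ∀ n : ℕ, (∫ y, (∫ θ in box S.a S.b,
      ((S.μ θ) (cyl y n)).toReal / ((S.μ θ₀) (cyl y n)).toReal ∂P₀) ∂(S.μ θ₀)) ≤ 1 := by
    intro n
    rw [hfac n, integral_factor (S.μ θ₀) n (fun w : Fin n → Fin q => ∫ θ in box S.a S.b,
      ((S.μ θ) (proj q n ⁻¹' {w})).toReal / ((S.μ θ₀) (proj q n ⁻¹' {w})).toReal ∂P₀)]
    have hterm : ∀ w : Fin n → Fin q,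
        ((S.μ θ₀) (proj q n ⁻¹' {w})).toReal * (∫ θ in box S.a S.b,
            ((S.μ θ) (proj q n ⁻¹' {w})).toReal / ((S.μ θ₀) (proj q n ⁻¹' {w})).toReal ∂P₀)
          ≤ ∫ θ in box S.a S.b, ((S.μ θ) (proj q n ⁻¹' {w})).toReal ∂P₀ := by
      intro w
      rw [← integral_const_mul]
      refine setIntegral_mono_on ((hratio_intOn n w).const_mul _) (hfiber_int n w)
        (measurableSet_box S.a S.b) fun θ hθ => ?_
      rcases eq_or_ne (((S.μ θ₀) (proj q n ⁻¹' {w})).toReal) 0 with h | h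
      · simp [h, ENNReal.toReal_nonneg]
      · rw [mul_comm, div_mul_cancel₀ _ h]
    calc ∑ w : Fin n → Fin q, ((S.μ θ₀) (proj q n ⁻¹' {w})).toReal *
          (∫ θ in box S.a S.b, ((S.μ θ) (proj q n ⁻¹' {w})).toReal /
            ((S.μ θ₀) (proj q n ⁻¹' {w})).toReal ∂P₀)
        ≤ ∑ w : Fin n → Fin q, ∫ θ in box S.a S.b,
            ((S.μ θ) (proj q n ⁻¹' {w})).toReal ∂P₀ :=
          Finset.sum_le_sum fun w _ => hterm w
      _ = ∫ θ in box S.a S.b, ∑ w : Fin n → Fin q,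
            ((S.μ θ) (proj q n ⁻¹' {w})).toReal ∂P₀ :=
          (integral_finset_sum _ fun w _ => hfiber_int n w).symm
      _ = ∫ θ in box S.a S.b, (1:ℝ) ∂P₀ :=
          setIntegral_congr_fun (measurableSet_box S.a S.b) fun θ hθ => by
            haveI := S.prob θ hθ
            exact sum_measure_fiber (S.μ θ) n
      _ = (P₀ (box S.a S.b)).toReal := by rw [setIntegral_const, measureReal_def, smul_eq_mul, mul_one]
      _ ≤ 1 := by
          have h := ENNReal.toReal_mono (by simp : (1:ENNReal) ≠ ⊤)
            (prob_le_one (μ := P₀) (s := box S.a S.b))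
          simpa using h
  -- Borel–Cantelli upper estimates, for a countable family of thresholds
  have hBC : ∀ m : ℕ, ∀ᵐ y ∂(S.μ θ₀), ∀ᶠ n : ℕ in Filter.atTop,
      ¬ (Real.exp ((n : ℝ) * (1/((m:ℝ)+1))) ≤ ∫ θ in box S.a S.b,
        ((S.μ θ) (cyl y n)).toReal / ((S.μ θ₀) (cyl y n)).toReal ∂P₀) := by
    intro m
    set zm : ℝ := 1/((m:ℝ)+1) with hζm
    have hζmpos : 0 < zm := by positivity
    set s : ℕ → Set (FS q) := fun n => {y : FS q | Real.exp ((n : ℝ) * zm)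
      ≤ ∫ θ in box S.a S.b,
        ((S.μ θ) (cyl y n)).toReal / ((S.μ θ₀) (cyl y n)).toReal ∂P₀} with hs
    have hb : ∀ n, (S.μ θ₀) (s n) ≤ ENNReal.ofReal ((Real.exp (-zm)) ^ n) := by
      intro n
      have hmar := mul_meas_ge_le_integral_of_nonneg
        (ae_of_all _ (hZnonneg n)) (hintZ n) (Real.exp ((n : ℝ) * zm))
      have h1 := le_trans hmar (hZle1 n)
      have h2 : ((S.μ θ₀) (s n)).toReal ≤ (Real.exp (-zm)) ^ n := by
        rw [← Real.exp_nat_mul]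
        have hrw : Real.exp ((n:ℝ) * -zm) = (Real.exp ((n:ℝ) * zm))⁻¹ := by
          rw [← Real.exp_neg]
          ring_nf
        rw [hrw, ← one_div]
        rw [le_div_iff₀ (Real.exp_pos _)]
        calc ((S.μ θ₀) (s n)).toReal * Real.exp ((n:ℝ) * zm)
            = Real.exp ((n:ℝ) * zm) * ((S.μ θ₀) (s n)).toReal := mul_comm _ _
          _ ≤ 1 := h1
      exact (ENNReal.le_ofReal_iff_toReal_le (measure_ne_top _ _)
        (pow_nonneg (Real.exp_nonneg _) n)).mpr h2
    have hgeo : ∑' n : ℕ, ENNReal.ofReal ((Real.exp (-zm)) ^ n) ≠ ⊤ := by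
      have hr : ENNReal.ofReal (Real.exp (-zm)) < 1 :=
        ENNReal.ofReal_lt_one.mpr (Real.exp_lt_one_iff.mpr (by linarith))
      have heq : ∀ n : ℕ, ENNReal.ofReal ((Real.exp (-zm)) ^ n)
          = (ENNReal.ofReal (Real.exp (-zm))) ^ n := fun n =>
        ENNReal.ofReal_pow (Real.exp_nonneg _) n
      simp only [heq]
      rw [ENNReal.tsum_geometric]
      rw [ENNReal.inv_ne_top]
      intro hzero
      exact absurd (tsub_eq_zero_iff_le.mp hzero) (not_le.mpr hr)
    exact ae_eventually_notMem (ne_top_of_le_ne_top hgeo (ENNReal.tsum_le_tsum hb))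
  have haeΩ : ∀ᵐ y ∂(S.μ θ₀), y ∈ sftSet S.M := by
    rw [ae_iff]
    have h : {y | ¬ y ∈ sftSet S.M} = (sftSet S.M)ᶜ := rfl
    rw [h, measure_compl (measurableSet_sft S.M) (measure_ne_top _ _), S.supp θ₀ hθ₀,
      measure_univ]
    simp
  have hBCall : ∀ᵐ y ∂(S.μ θ₀), ∀ m : ℕ, ∀ᶠ n : ℕ in Filter.atTop,
      ¬ (Real.exp ((n : ℝ) * (1/((m:ℝ)+1))) ≤ ∫ θ in box S.a S.b,
        ((S.μ θ) (cyl y n)).toReal / ((S.μ θ₀) (cyl y n)).toReal ∂P₀) :=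
    ae_all_iff.mpr hBC
  filter_upwards [haeΩ, hBCall] with y hyΩ hyBC
  intro ζ hζ
  constructor
  · -- lower (frequently) bound
    refine Filter.Eventually.frequently ?_
    obtain ⟨δ, hδpos, hδ⟩ := S.contJ θ₀ hθ₀ (ζ/2) (by linarith)
    have hβpos : 0 < (P₀ (pball (box S.a S.b) θ₀ δ)).toReal :=
      ENNReal.toReal_pos (ne_of_gt (pball_pos P₀ hA S.hab hθ₀ hδpos)) (measure_ne_top _ _)
    set β : ℝ := (P₀ (pball (box S.a S.b) θ₀ δ)).toReal with hβ
    set A : ℝ := Real.log (S.K⁻¹ * S.K⁻¹ * β) with hAdef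
    obtain ⟨n₀, hn₀⟩ := exists_nat_gt (2 * |A| / ζ)
    filter_upwards [Filter.eventually_ge_atTop 1, Filter.eventually_ge_atTop n₀]
      with n hn1 hnn0
    have hnpos : (0:ℝ) < n := by exact_mod_cast hn1
    -- pointwise lower bound for the ratio on the δ-ball
    set cn : ℝ := S.K⁻¹ * S.K⁻¹ * Real.exp (-(n:ℝ) * (ζ/2)) with hcn
    have hcnpos : 0 < cn := by positivity
    have hlb : ∀ θ ∈ box S.a S.b, dist θ θ₀ < δ →
        cn ≤ ((S.μ θ) (cyl y n)).toReal / ((S.μ θ₀) (cyl y n)).toReal := by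
      intro θ hθ hdist
      have hd := hδ θ hθ hdist
      have hsup : ∀ x, |Real.log (S.J θ x) - Real.log (S.J θ₀ x)| ≤ ζ/2 := fun x =>
        le_of_lt (lt_of_le_of_lt (abs_sub_le_dLip (S.lip θ hθ) (S.lip θ₀ hθ₀) x) hd)
      set bθ := birk (fun z => Real.log (S.J θ z)) n y with hbθ
      set b0 := birk (fun z => Real.log (S.J θ₀ z)) n y with hb0
      have hbirk : -(n:ℝ) * (ζ/2) ≤ bθ - b0 := by
        have hsum : bθ - b0 = ∑ j ∈ Finset.range n,
            (Real.log (S.J θ (shift^[j] y)) - Real.log (S.J θ₀ (shift^[j] y))) := by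
          rw [hbθ, hb0]
          simp only [birk, Finset.sum_sub_distrib]
        rw [hsum]
        have hcard := Finset.card_nsmul_le_sum (Finset.range n)
          (fun j => Real.log (S.J θ (shift^[j] y)) - Real.log (S.J θ₀ (shift^[j] y)))
          (-(ζ/2)) (fun j _ => (abs_le.mp (hsup (shift^[j] y))).1)
        rw [Finset.card_range, nsmul_eq_mul] at hcard
        calc -(n:ℝ) * (ζ/2) = (n:ℝ) * (-(ζ/2)) := by ring
          _ ≤ _ := hcard
      have h1 := gibbs_lb S hθ hyΩ hn1
      have h2 := gibbs_ub S hθ₀ hyΩ hn1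
      have ha : 0 ≤ ((S.μ θ) (cyl y n)).toReal := ENNReal.toReal_nonneg
      have ha0 : 0 < ((S.μ θ₀) (cyl y n)).toReal := cyl_pos S hθ₀ hyΩ hn1
      have hdiv : (S.K⁻¹ * Real.exp bθ) / (S.K * Real.exp b0)
          ≤ ((S.μ θ) (cyl y n)).toReal / ((S.μ θ₀) (cyl y n)).toReal :=
        div_le_div₀ ha h1 ha0 h2
      have hrw : (S.K⁻¹ * Real.exp bθ) / (S.K * Real.exp b0)
          = S.K⁻¹ * S.K⁻¹ * Real.exp (bθ - b0) := by
        rw [Real.exp_sub]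
        field_simp
      refine le_trans ?_ hdiv
      rw [hrw, hcn]
      exact mul_le_mul_of_nonneg_left (Real.exp_le_exp.mpr hbirk)
        (by positivity)
    -- from the pointwise bound to a bound on `Z n y`
    have hEmeas : MeasurableSet (Metric.ball θ₀ δ) := measurableSet_ball
    have hglb : ∫ θ in box S.a S.b, (Metric.ball θ₀ δ).indicator (fun _ => cn) θ ∂P₀
        ≤ ∫ θ in box S.a S.b,
          ((S.μ θ) (cyl y n)).toReal / ((S.μ θ₀) (cyl y n)).toReal ∂P₀ := by
      refine setIntegral_mono_on ((integrable_const cn).indicator hEmeas).integrableOn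
        ?_ (measurableSet_box S.a S.b) fun θ hθ => ?_
      · have h := integrableOn_cylratio S P₀ y n (((S.μ θ₀) (cyl y n)).toReal)
        exact h
      · rcases em (θ ∈ Metric.ball θ₀ δ) with hE | hE
        · rw [Set.indicator_of_mem hE]
          exact hlb θ hθ (Metric.mem_ball.mp hE)
        · rw [Set.indicator_of_notMem hE]
          exact div_nonneg ENNReal.toReal_nonneg ENNReal.toReal_nonneg
    have hgeq : ∫ θ in box S.a S.b, (Metric.ball θ₀ δ).indicator (fun _ => cn) θ ∂P₀
        = cn * β := by
      rw [setIntegral_indicator hEmeas]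
      have hset : box S.a S.b ∩ Metric.ball θ₀ δ = pball (box S.a S.b) θ₀ δ := by
        ext θ
        simp [pball, Metric.mem_ball, Set.mem_inter_iff]
      rw [hset, setIntegral_const, measureReal_def, hβ, smul_eq_mul, mul_comm]
    have hZlb : cn * β ≤ ∫ θ in box S.a S.b,
        ((S.μ θ) (cyl y n)).toReal / ((S.μ θ₀) (cyl y n)).toReal ∂P₀ := by
      rw [← hgeq]; exact hglb
    have hcβpos : 0 < cn * β := mul_pos hcnpos hβpos
    have hlogZ : A + (-(n:ℝ) * (ζ/2)) ≤ Real.log (∫ θ in box S.a S.b,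
        ((S.μ θ) (cyl y n)).toReal / ((S.μ θ₀) (cyl y n)).toReal ∂P₀) := by
      have hl := Real.log_le_log hcβpos hZlb
      have hcnβ : cn * β = (S.K⁻¹ * S.K⁻¹ * β) * Real.exp (-(n:ℝ) * (ζ/2)) := by
        rw [hcn]; ring
      rw [hcnβ, Real.log_mul (by positivity) (Real.exp_ne_zero _), Real.log_exp] at hl
      rw [hAdef]
      exact hl
    -- conclude
    have hA2 : |A| / (n:ℝ) ≤ ζ/2 := by
      rw [div_le_iff₀ hnpos]
      have h2 : 2 * |A| < (n₀:ℝ) * ζ := (div_lt_iff₀ hζ).mp hn₀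
      have h3 : (n₀:ℝ) ≤ (n:ℝ) := by exact_mod_cast hnn0
      nlinarith
    have hmul := mul_le_mul_of_nonneg_left hlogZ (le_of_lt (one_div_pos.mpr hnpos))
    have hrw2 : (1/(n:ℝ)) * (A + (-(n:ℝ) * (ζ/2))) = A/(n:ℝ) - ζ/2 := by
      field_simp
      ring
    rw [hrw2] at hmul
    have hAn : -(ζ/2) ≤ A/(n:ℝ) := by
      have h4 : -|A| ≤ A := neg_abs_le A
      have h5 : -|A|/(n:ℝ) ≤ A/(n:ℝ) := (div_le_div_iff_of_pos_right hnpos).mpr h4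
      rw [neg_div] at h5
      linarith
    linarith
  · -- upper (eventually) bound
    obtain ⟨m, hm⟩ := exists_nat_one_div_lt hζ
    filter_upwards [hyBC m, Filter.eventually_ge_atTop 1] with n hZn hn1
    have hnpos : (0:ℝ) < n := by exact_mod_cast hn1
    have hZlt := not_le.mp hZn
    rcases eq_or_lt_of_le (hZnonneg n y) with h0 | h0
    · rw [← h0, Real.log_zero, mul_zero]
      exact le_of_lt hζ
    · have hlog : Real.log (∫ θ in box S.a S.b,
          ((S.μ θ) (cyl y n)).toReal / ((S.μ θ₀) (cyl y n)).toReal ∂P₀)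
            ≤ (n:ℝ) * (1/((m:ℝ)+1)) :=
        (Real.log_le_iff_le_exp h0).mpr (le_of_lt hZlt)
      have hmul := mul_le_mul_of_nonneg_left hlog (le_of_lt (one_div_pos.mpr hnpos))
      have hrw : (1/(n:ℝ)) * ((n:ℝ) * (1/((m:ℝ)+1))) = 1/((m:ℝ)+1) := by
        field_simp
      rw [hrw] at hmul
      linarith

end PaperBGI
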